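/- The constant sequence a_n(t) = e^{-t} for all n ≥ 1 solves the shell model ȧ_n = (n-1)a_{n-1} - n a_{n+1} (with a_0 = 0) with initial condition a_n(0) = 1 for all n, and its energy flux satisfies N·a_N(t)·a_{N+1}(t) = N·e^{-2t} → +∞ as N → ∞ for every fixed t; i.e., the solution displays an infinite dissipation rate. -/

import Mathlib

/-- The constant-in-`n` sequence `a_n(t) = e^{-t}` (for `n ≥ 1`, with `a_0 = 0`)
solves the shell model `ȧ_n = (n-1)a_{n-1} - n a_{n+1}` with `a_n(0) = 1`, and its
energy flux `N·a_N·a_{N+1} = N e^{-2t}` tends to `+∞` as `N → ∞` for every fixed `t`: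
the solution displays an infinite dissipation rate. -/
theorem stmt3 (a : ℕ → ℝ → ℝ)
    (h0 : ∀ t : ℝ, a 0 t = 0)
    (ha : ∀ n : ℕ, 1 ≤ n → ∀ t : ℝ, a n t = Real.exp (-t)) :
    (∀ n : ℕ, 1 ≤ n → a n 0 = 1) ∧
    (∀ t : ℝ, ∀ n : ℕ, 1 ≤ n →
      HasDerivAt (a n) (((n : ℝ) - 1) * a (n - 1) t - (n : ℝ) * a (n + 1) t) t) ∧
    (∀ t : ℝ, ∀ N : ℕ, 1 ≤ N →
      (N : ℝ) * a N t * a (N + 1) t = (N : ℝ) * Real.exp (-2 * t)) ∧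
    (∀ t : ℝ, Filter.Tendsto (fun N : ℕ => (N : ℝ) * a N t * a (N + 1) t)
      Filter.atTop Filter.atTop) := by
  refine ⟨fun n hn => by rw [ha n hn 0]; simp, ?_, ?_, ?_⟩
  · intro t n hn
    have hfun : a n = fun t : ℝ => Real.exp (-t) := funext (ha n hn)
    have hder : HasDerivAt (fun t : ℝ => Real.exp (-t)) (-Real.exp (-t)) t := by
      have h := (Real.hasDerivAt_exp (-t)).comp t (hasDerivAt_neg t)
      simp at h; exact h
    have hval : ((n : ℝ) - 1) * a (n - 1) t - (n : ℝ) * a (n + 1) t = -Real.exp (-t) := by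
      rcases eq_or_lt_of_le hn with h1 | h2
      · rw [← h1]; simp [h0, ha 2 (by norm_num)]
      · have : 1 ≤ n - 1 := by omega
        rw [ha (n - 1) this, ha (n + 1) (by omega)]
        ring
    rw [hfun, hval]; exact hder
  · intro t N hN
    rw [ha N hN t, ha (N + 1) (by omega) t]
    rw [mul_assoc, ← Real.exp_add]; ring_nf
  · intro t
    have h := Filter.Tendsto.atTop_mul_const (Real.exp_pos (-2 * t))
      (tendsto_natCast_atTop_atTop (R := ℝ))
    apply h.congr'
    filter_upwards [Filter.eventually_ge_atTop 1] with N hN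
    rw [ha N hN t, ha (N + 1) (by omega) t]
    rw [mul_assoc, ← Real.exp_add]; ring_nf
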